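/- Let Γ be a connected finite simplicial graph and let v, v′ be vertices whose equivalence classes [v], [v′] are maximal with respect to ≤. Then there exists a finite sequence of vertices v = u₀, u₁, …, u_n = v′ such that each [uᵢ] is maximal and, for each i, either uᵢ ∼ uᵢ₊₁ or uᵢ is adjacent to uᵢ₊₁ in Γ. (Equivalently, the graph Γ₀ whose vertices are the maximal equivalence classes, with [u] and [w] joined by an edge iff u and w are adjacent in Γ, is connected.) -/

import Mathlib

open SimpleGraph

namespace RaagPaper

variable {V : Type*}

/-- The link of a vertex: the set of vertices adjacent to it. -/
def lk (G : SimpleGraph V) (v : V) : Set V := G.neighborSet v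

/-- The (closed) star of a vertex: `st(v) = lk(v) ∪ {v}`. -/
def st (G : SimpleGraph V) (v : V) : Set V := insert v (G.neighborSet v)

/-- The preorder on vertices: `v ≤ w` iff `lk(v) ⊆ st(w)`. -/
def vle (G : SimpleGraph V) (v w : V) : Prop := lk G v ⊆ st G w

/-- Equivalence of vertices: `v ∼ w` iff `v ≤ w` and `w ≤ v`. -/
def vequiv (G : SimpleGraph V) (v w : V) : Prop := vle G v w ∧ vle G w v

/-- The equivalence class `[v]` of a vertex `v`. -/
def cls (G : SimpleGraph V) (v : V) : Set V := {u | vequiv G u v}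

/-- `[v]` is maximal with respect to the partial order induced by `≤`. -/
def IsMaximalClass (G : SimpleGraph V) (v : V) : Prop := ∀ w, vle G v w → vle G w v

/-- `L_[v] = lk(v) \ [v]`. -/
def Lset (G : SimpleGraph V) (v : V) : Set V := lk G v \ cls G v

/-- `J_[v] = [v] ∪ L_[v]`, the join associated to `[v]`. -/
def Jset (G : SimpleGraph V) (v : V) : Set V := cls G v ∪ Lset G v

/-- `v ∈ V_ab` : any two distinct vertices of `[v]` are adjacent (so `A_[v]` is abelian). -/
def Vab (G : SimpleGraph V) (v : V) : Prop :=
  ∀ x ∈ cls G v, ∀ y ∈ cls G v, x ≠ y → G.Adj x y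

lemma vle_refl' (G : SimpleGraph V) (v : V) : vle G v v := fun _ hx => Or.inr hx

lemma vle_trans' {G : SimpleGraph V} {u v w : V} (h1 : vle G u v) (h2 : vle G v w) :
    vle G u w := by
  intro x hx
  rcases h1 hx with heq | hvx
  · subst heq
    have huv : G.Adj u x := hx
    rcases h2 (G.adj_symm huv : u ∈ lk G x) with heq2 | hwu
    · subst heq2; exact Or.inr huv
    · rcases h1 (G.adj_symm hwu : w ∈ lk G u) with heq3 | hvw
      · exact Or.inl heq3.symm
      · exact Or.inr (G.adj_symm hvw)
  · exact h2 hvx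

lemma exists_maximal_above [Fintype V] (G : SimpleGraph V) (w : V) :
    ∃ m, vle G w m ∧ IsMaximalClass G m := by
  classical
  set f : V → ℕ := fun m => (Finset.univ.filter (fun x => vle G m x)).card with hf
  obtain ⟨m, hm, hmin⟩ :=
    Finset.exists_min_image (Finset.univ.filter (fun x => vle G w x)) f
      ⟨w, Finset.mem_filter.mpr ⟨Finset.mem_univ w, vle_refl' G w⟩⟩
  have hwm : vle G w m := (Finset.mem_filter.mp hm).2
  refine ⟨m, hwm, ?_⟩
  intro z hz
  by_contra hzm
  have hsub : (Finset.univ.filter (fun x => vle G z x)) ⊂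
      (Finset.univ.filter (fun x => vle G m x)) := by
    refine ⟨fun x hx => ?_, fun hsup => hzm ?_⟩
    · exact Finset.mem_filter.mpr ⟨Finset.mem_univ x,
        vle_trans' hz (Finset.mem_filter.mp hx).2⟩
    · have := hsup (Finset.mem_filter.mpr ⟨Finset.mem_univ m, vle_refl' G m⟩)
      exact (Finset.mem_filter.mp this).2
  have hlt : f z < f m := Finset.card_lt_card hsub
  have hz' : z ∈ Finset.univ.filter (fun x => vle G w x) :=
    Finset.mem_filter.mpr ⟨Finset.mem_univ z, vle_trans' hwm hz⟩
  have := hmin z hz'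
  omega

/-- key step: if `x ∈ st m`, `x ≤ m₂`, and `m` is maximal, then `m ∼ m₂` or `m` adj `m₂`. -/
lemma step_aux {G : SimpleGraph V} {m m₂ x : V} (hm : IsMaximalClass G m)
    (hx : x ∈ st G m) (hxm : vle G x m₂) :
    vequiv G m m₂ ∨ G.Adj m m₂ := by
  rcases hx with rfl | hadj
  · exact Or.inl ⟨hxm, hm _ hxm⟩
  · -- Adj m x, so m ∈ lk x ⊆ st m₂
    rcases hxm (G.adj_symm hadj : m ∈ lk G x) with rfl | h2
    · exact Or.inl ⟨vle_refl' G m, vle_refl' G m⟩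
    · exact Or.inr (G.adj_symm h2)

/-- Chains of maximal classes. -/
def HasChain (G : SimpleGraph V) (m m' : V) : Prop :=
  ∃ (n : ℕ) (u : Fin (n + 1) → V),
    u 0 = m ∧ u (Fin.last n) = m' ∧
    (∀ i, IsMaximalClass G (u i)) ∧
    (∀ i : Fin n, vequiv G (u i.castSucc) (u i.succ) ∨ G.Adj (u i.castSucc) (u i.succ))

lemma HasChain.refl {G : SimpleGraph V} {m : V} (hm : IsMaximalClass G m) :
    HasChain G m m :=
  ⟨0, fun _ => m, rfl, rfl, fun _ => hm, fun i => i.elim0⟩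

lemma HasChain.cons {G : SimpleGraph V} {m m' m'' : V}
    (hmax : IsMaximalClass G m)
    (hstep : vequiv G m m' ∨ G.Adj m m')
    (h : HasChain G m' m'') : HasChain G m m'' := by
  obtain ⟨n, u, h0, hl, hmaxs, hsteps⟩ := h
  refine ⟨n + 1, Fin.cons m u, Fin.cons_zero _ _, ?_, ?_, ?_⟩
  · rw [← Fin.succ_last, Fin.cons_succ]; exact hl
  · intro i
    induction i using Fin.cases with
    | zero => simpa using hmax
    | succ j => simpa using hmaxs j
  · intro i
    induction i using Fin.cases with
    | zero => simpa [h0] using hstep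
    | succ j => simpa [← Fin.succ_castSucc] using hsteps j

lemma walk_chain [Fintype V] {G : SimpleGraph V} (hconn : G.Connected) :
    ∀ {w w' : V}, G.Walk w w' → ∀ m m', IsMaximalClass G m → IsMaximalClass G m' →
      vle G w m → vle G w' m' → HasChain G m m' := by
  intro w w' p
  induction p with
  | nil =>
    intro m m' hm hm' h1 h2
    by_cases hmm : m = m'
    · subst hmm; exact HasChain.refl hm
    · -- find a neighbor of w
      rename_i w
      have hx : ∃ x, G.Adj w x := by
        by_cases hwm : w = m
        · obtain ⟨q⟩ := hconn w m'
          cases q with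
          | nil => exact absurd h2 (by subst hwm; exact fun h => hmm rfl)
          | cons h _ => exact ⟨_, h⟩
        · obtain ⟨q⟩ := hconn w m
          cases q with
          | nil => exact absurd rfl hwm
          | cons h _ => exact ⟨_, h⟩
      obtain ⟨x, hadj⟩ := hx
      obtain ⟨mx, hxmx, hmx⟩ := exists_maximal_above G x
      have s1 : vequiv G m mx ∨ G.Adj m mx := step_aux hm (h1 hadj) hxmx
      have s2 : vequiv G m' mx ∨ G.Adj m' mx := step_aux hm' (h2 hadj) hxmx
      have s2' : vequiv G mx m' ∨ G.Adj mx m' := by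
        rcases s2 with h | h
        · exact Or.inl ⟨h.2, h.1⟩
        · exact Or.inr (G.adj_symm h)
      exact HasChain.cons hm s1 (HasChain.cons hmx s2' (HasChain.refl hm'))
  | cons hadj q ih =>
    intro m m' hm hm' h1 h2
    obtain ⟨mx, hxmx, hmx⟩ := exists_maximal_above G _
    have s1 : vequiv G m mx ∨ G.Adj m mx := step_aux hm (h1 hadj) hxmx
    exact HasChain.cons hm s1 (ih mx m' hmx hm' hxmx h2)

/-- the graph `Γ₀` of maximal equivalence classes is connected: any two maximal
classes are joined by a sequence of maximal classes in which consecutive classes are equal or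
adjacent. -/
theorem gammaZero_connected {V : Type*} [Fintype V] [Nonempty V] (G : SimpleGraph V)
    (hconn : G.Connected) (v v' : V)
    (hv : IsMaximalClass G v) (hv' : IsMaximalClass G v') :
    ∃ (n : ℕ) (u : Fin (n + 1) → V),
      u 0 = v ∧ u (Fin.last n) = v' ∧
      (∀ i, IsMaximalClass G (u i)) ∧
      (∀ i : Fin n, vequiv G (u i.castSucc) (u i.succ) ∨ G.Adj (u i.castSucc) (u i.succ)) := by
  obtain ⟨p⟩ := hconn v v'
  exact walk_chain hconn p v v' hv hv' (vle_refl' G v) (vle_refl' G v')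

end RaagPaper
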